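/- Suppose L ∈ ℝ^{(n−1)×d} is a stationary point of f_L (VᵀK*(F(VL))VL = 0) that is not a global minimizer (F(VL) ≠ 0), and suppose rank(L) < d. Then the second-order necessary optimality conditions fail at L: there exists ΔL ∈ ℝ^{(n−1)×d} such that ‖K((VL)(VΔL)ᵀ + (VΔL)(VL)ᵀ)‖² + 2⟨F(VL), K((VΔL)(VΔL)ᵀ)⟩ < 0. -/
import Mathlib


open Matrix

attribute [local instance] Matrix.frobeniusNormedAddCommGroup Matrix.frobeniusNormedSpace

noncomputable section

/-- The all-ones vector in `ℝⁿ`. -/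
def eV (n : ℕ) : Fin n → ℝ := fun _ => 1

/-- The Lindenstrauss operator `K(G) = diag(G)eᵀ + e diag(G)ᵀ − 2G`. -/
def Kop {n : ℕ} (G : Matrix (Fin n) (Fin n) ℝ) : Matrix (Fin n) (Fin n) ℝ :=
  vecMulVec G.diag (eV n) + vecMulVec (eV n) G.diag - (2 : ℝ) • G

/-- The adjoint `K*(S) = 2(Diag(Se) − S)`. -/
def Kstar {n : ℕ} (S : Matrix (Fin n) (Fin n) ℝ) : Matrix (Fin n) (Fin n) ℝ :=
  (2 : ℝ) • (Matrix.diagonal (S *ᵥ eV n) - S)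

/-- `F(P) = K(PPᵀ) − D̄`, where `D̄ = K(P̄P̄ᵀ)`. -/
def Fm {n d : ℕ} (Pbar P : Matrix (Fin n) (Fin d) ℝ) : Matrix (Fin n) (Fin n) ℝ :=
  Kop (P * Pᵀ) - Kop (Pbar * Pbarᵀ)

/-- `f(P) = (1/2)‖F(P)‖²` with the Frobenius norm. -/
def fObj {n d : ℕ} (Pbar P : Matrix (Fin n) (Fin d) ℝ) : ℝ :=
  (1 / 2) * ‖Fm Pbar P‖ ^ 2

/-- The Hessian quadratic form of `f` at `P`:
`Q_P(ΔP) = ‖K(PΔPᵀ + ΔPPᵀ)‖² + 2⟨F(P), K(ΔPΔPᵀ)⟩`. -/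
def QForm {n d : ℕ} (Pbar P ΔP : Matrix (Fin n) (Fin d) ℝ) : ℝ :=
  ‖Kop (P * ΔPᵀ + ΔP * Pᵀ)‖ ^ 2 +
    2 * Matrix.trace ((Fm Pbar P)ᵀ * Kop (ΔP * ΔPᵀ))

/-- `x` is a local minimizer of `g`: there is `δ > 0` with `g x ≤ g y` whenever `‖y − x‖ ≤ δ`. -/
def IsLocMin {E : Type*} [SeminormedAddCommGroup E] (g : E → ℝ) (x : E) : Prop :=
  ∃ δ > 0, ∀ y, ‖y - x‖ ≤ δ → g x ≤ g y

/- ### Auxiliary lemmas -/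

lemma trace_mul_sum' {n : ℕ} (A B : Matrix (Fin n) (Fin n) ℝ) :
    Matrix.trace (A * B) = ∑ i, ∑ j, A i j * B j i := by
  simp [Matrix.trace, Matrix.mul_apply, Matrix.diag]

lemma Kop_apply' {n : ℕ} (G : Matrix (Fin n) (Fin n) ℝ) (i j : Fin n) :
    Kop G i j = G i i + G j j - 2 * G i j := by
  simp [Kop, vecMulVec_apply, eV, Matrix.diag]

lemma Kop_zero' {n : ℕ} : Kop (0 : Matrix (Fin n) (Fin n) ℝ) = 0 := by
  ext i j; simp [Kop_apply']

lemma Kop_smul' {n : ℕ} (c : ℝ) (G : Matrix (Fin n) (Fin n) ℝ) :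
    Kop (c • G) = c • Kop G := by
  ext i j; simp [Kop_apply']; ring

lemma Kop_symm' {n : ℕ} {G : Matrix (Fin n) (Fin n) ℝ} (hG : Gᵀ = G) :
    (Kop G)ᵀ = Kop G := by
  have hsym : ∀ i j, G i j = G j i := fun i j => by simpa using congrFun (congrFun hG j) i
  ext i j
  simp only [Matrix.transpose_apply, Kop_apply']
  rw [hsym i j]; ring

lemma Kstar_symm' {n : ℕ} {S : Matrix (Fin n) (Fin n) ℝ} (hS : Sᵀ = S) :
    (Kstar S)ᵀ = Kstar S := by
  simp [Kstar, Matrix.transpose_smul, Matrix.transpose_sub, Matrix.diagonal_transpose, hS]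

lemma adjointK {n : ℕ} {S : Matrix (Fin n) (Fin n) ℝ} (hS : Sᵀ = S)
    (G : Matrix (Fin n) (Fin n) ℝ) :
    Matrix.trace (S * Kop G) = Matrix.trace (Kstar S * G) := by
  have hsym : ∀ i j, S i j = S j i := fun i j => by simpa using congrFun (congrFun hS j) i
  rw [trace_mul_sum', trace_mul_sum']
  simp only [Kop_apply', Kstar, Matrix.smul_apply, Matrix.sub_apply, Matrix.diagonal_apply,
    Matrix.mulVec, dotProduct, eV, mul_one, smul_eq_mul, mul_sub, sub_mul, mul_ite,
    mul_zero, ite_mul, zero_mul, Finset.sum_sub_distrib, Finset.sum_ite_eq, Finset.mem_univ,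
    if_true]
  have h1 : ∑ x : Fin n, ∑ y : Fin n, S x y * G y y = ∑ x : Fin n, (∑ y, S x y) * G x x := by
    rw [Finset.sum_comm]
    refine Finset.sum_congr rfl fun x _ => ?_
    rw [Finset.sum_mul]
    exact Finset.sum_congr rfl fun y _ => by rw [hsym y x]
  have h2 : ∀ x : Fin n, ∑ y : Fin n, S x y * G x x = (∑ y, S x y) * G x x := fun x =>
    (Finset.sum_mul _ _ _).symm
  simp only [mul_add, Finset.sum_add_distrib, h1, h2]
  rw [← Finset.sum_add_distrib]
  congr 1
  · exact Finset.sum_congr rfl fun x _ => by ring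
  · exact Finset.sum_congr rfl fun x _ => Finset.sum_congr rfl fun y _ => by ring

lemma mul_vecMulVec' {m n p : ℕ} (A : Matrix (Fin m) (Fin n) ℝ) (b : Fin n → ℝ)
    (c : Fin p → ℝ) : A * vecMulVec b c = vecMulVec (A *ᵥ b) c := by
  ext i k
  simp only [Matrix.mul_apply, vecMulVec_apply, Matrix.mulVec, dotProduct,
    Finset.sum_mul]
  exact Finset.sum_congr rfl fun j _ => by ring

lemma vecMulVec_mul_vecMulVec' {m n : ℕ} (w : Fin m → ℝ) (u : Fin n → ℝ) :
    vecMulVec w u * vecMulVec u w = (u ⬝ᵥ u) • vecMulVec w w := by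
  ext i k
  simp only [Matrix.mul_apply, vecMulVec_apply, Matrix.smul_apply, dotProduct,
    smul_eq_mul, Finset.sum_mul, Finset.mul_sum]
  exact Finset.sum_congr rfl fun j _ => by ring

lemma trace_conj' {n m : ℕ} (S : Matrix (Fin n) (Fin n) ℝ) (V : Matrix (Fin n) (Fin m) ℝ)
    (X : Matrix (Fin m) (Fin m) ℝ) :
    Matrix.trace (S * (V * X * Vᵀ)) = Matrix.trace (Vᵀ * S * V * X) := by
  rw [← Matrix.mul_assoc, Matrix.trace_mul_comm]
  simp only [Matrix.mul_assoc]

/-- The all-ones functional. -/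
def eFunc (n : ℕ) : (Fin n → ℝ) →ₗ[ℝ] ℝ where
  toFun p := eV n ⬝ᵥ p
  map_add' a b := by simp [dotProduct_add]
  map_smul' c a := by simp

lemma projV' {n : ℕ} (hn : 0 < n) (V : Matrix (Fin n) (Fin (n - 1)) ℝ)
    (hV : Vᵀ * V = 1) (hVe : Vᵀ *ᵥ eV n = 0) {p : Fin n → ℝ} (hp : eV n ⬝ᵥ p = 0) :
    V *ᵥ (Vᵀ *ᵥ p) = p := by
  set T := V.mulVecLin with hT
  have hinj : Function.Injective T := by
    have hli : Function.LeftInverse (Vᵀ).mulVecLin T := by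
      intro x
      simp only [hT, Matrix.mulVecLin_apply, Matrix.mulVec_mulVec, hV, Matrix.one_mulVec]
    exact hli.injective
  have hrangeT : Module.finrank ℝ (LinearMap.range T) = n - 1 := by
    rw [LinearMap.finrank_range_of_inj hinj, Module.finrank_fin_fun]
  have hsurj : Function.Surjective (eFunc n) := by
    intro c
    refine ⟨fun _ => c / n, ?_⟩
    have hn' : (n : ℝ) ≠ 0 := Nat.cast_ne_zero.mpr hn.ne'
    simp [eFunc, dotProduct, eV, Finset.sum_const, Finset.card_univ]
    field_simp
  have hkerrank : Module.finrank ℝ (LinearMap.ker (eFunc n)) = n - 1 := by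
    have h := LinearMap.finrank_range_add_finrank_ker (eFunc n)
    rw [LinearMap.range_eq_top.mpr hsurj, finrank_top, Module.finrank_self,
      Module.finrank_fin_fun] at h
    omega
  have hle : LinearMap.range T ≤ LinearMap.ker (eFunc n) := by
    rintro _ ⟨w, rfl⟩
    simp only [LinearMap.mem_ker, hT, Matrix.mulVecLin_apply, eFunc, LinearMap.coe_mk,
      AddHom.coe_mk]
    rw [Matrix.dotProduct_mulVec, ← Matrix.mulVec_transpose, hVe]
    simp
  have heq : LinearMap.range T = LinearMap.ker (eFunc n) :=
    Submodule.eq_of_le_of_finrank_le hle (by rw [hkerrank, hrangeT])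
  have hpmem : p ∈ LinearMap.range T := by
    rw [heq]
    simpa [eFunc] using hp
  obtain ⟨w, hw⟩ := hpmem
  simp only [hT, Matrix.mulVecLin_apply] at hw
  have h' : Vᵀ *ᵥ V *ᵥ w = w := by rw [Matrix.mulVec_mulVec, hV, Matrix.one_mulVec]
  rw [← hw, h']

lemma vecMulVec_transpose' {m n : ℕ} (w : Fin m → ℝ) (u : Fin n → ℝ) :
    (vecMulVec w u)ᵀ = vecMulVec u w := by
  ext i j; simp [vecMulVec_apply]; ring

lemma trace_mul_vecMulVec' {n : ℕ} (A : Matrix (Fin n) (Fin n) ℝ) (a b : Fin n → ℝ) :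
    Matrix.trace (A * vecMulVec a b) = b ⬝ᵥ (A *ᵥ a) := by
  rw [trace_mul_sum']
  simp only [vecMulVec_apply, dotProduct, Matrix.mulVec, Finset.mul_sum]
  exact Finset.sum_congr rfl fun x _ => Finset.sum_congr rfl fun y _ => by ring

lemma trace_mul_gram' {m d : ℕ} (A : Matrix (Fin m) (Fin m) ℝ)
    (W : Matrix (Fin m) (Fin d) ℝ) :
    Matrix.trace (A * (W * Wᵀ)) = ∑ k, (fun i => W i k) ⬝ᵥ (A *ᵥ fun i => W i k) := by
  rw [trace_mul_sum']
  simp only [Matrix.mul_apply, Matrix.transpose_apply, dotProduct, Matrix.mulVec,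
    Finset.mul_sum]
  have hsw : ∀ x : Fin m, ∑ y : Fin m, ∑ i : Fin d, A x y * (W y i * W x i)
      = ∑ i : Fin d, ∑ y : Fin m, A x y * (W y i * W x i) := fun x => Finset.sum_comm
  simp only [hsw]
  rw [Finset.sum_comm]
  exact Finset.sum_congr rfl fun k _ => Finset.sum_congr rfl fun x _ =>
    Finset.sum_congr rfl fun y _ => by ring

/-- at a nonglobal stationary point `L` of `f_L` with `rank(L) < d`,
the second-order necessary conditions fail. -/
theorem stmt_17 {n d : ℕ} (hn : 0 < n) (hd : 0 < d)
    (Pbar : Matrix (Fin n) (Fin d) ℝ) (hPbar : Pbarᵀ *ᵥ eV n = 0)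
    (V : Matrix (Fin n) (Fin (n - 1)) ℝ) (hV : Vᵀ * V = 1) (hVe : Vᵀ *ᵥ eV n = 0)
    (L : Matrix (Fin (n - 1)) (Fin d) ℝ)
    (hstat : Vᵀ * Kstar (Fm Pbar (V * L)) * (V * L) = 0)
    (hF : Fm Pbar (V * L) ≠ 0)
    (hrank : L.rank < d) :
    ∃ ΔL : Matrix (Fin (n - 1)) (Fin d) ℝ, QForm Pbar (V * L) (V * ΔL) < 0 := by
  by_contra hcon
  push_neg at hcon
  obtain ⟨u, humem, hu0⟩ : ∃ u ∈ LinearMap.ker L.mulVecLin, u ≠ 0 := by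
    apply Submodule.exists_mem_ne_zero_of_ne_bot
    intro hbot
    have h := LinearMap.finrank_range_add_finrank_ker L.mulVecLin
    rw [hbot, finrank_bot, Module.finrank_fin_fun] at h
    have : L.rank = d := by simpa [Matrix.rank] using h
    omega
  have hLu : L *ᵥ u = 0 := humem
  set P := V * L with hP
  set F := Fm Pbar P with hFdef
  have hFsym : Fᵀ = F := by
    show (Fm Pbar P)ᵀ = Fm Pbar P
    unfold Fm
    rw [Matrix.transpose_sub,
      Kop_symm' (by rw [Matrix.transpose_mul, Matrix.transpose_transpose]),
      Kop_symm' (by rw [Matrix.transpose_mul, Matrix.transpose_transpose])]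
  set S := Kstar F with hSdef
  have hSsym : Sᵀ = S := Kstar_symm' hFsym
  set M := Vᵀ * S * V with hM
  have hu2 : 0 < u ⬝ᵥ u := by
    rcases (lt_or_eq_of_le (Finset.sum_nonneg fun i _ => mul_self_nonneg (u i))).symm with h | h
    · exact absurd (dotProduct_self_eq_zero.mp h.symm) hu0
    · exact h
  -- the quadratic form of M is nonnegative
  have hquad : ∀ v : Fin (n - 1) → ℝ, 0 ≤ v ⬝ᵥ (M *ᵥ v) := by
    intro v
    have h := hcon (vecMulVec v u)
    set w := V *ᵥ v with hw
    have hΔ : V * vecMulVec v u = vecMulVec w u := mul_vecMulVec' V v u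
    have hPu : P *ᵥ u = 0 := by
      rw [hP, ← Matrix.mulVec_mulVec, hLu, Matrix.mulVec_zero]
    have h1 : P * (vecMulVec w u)ᵀ = 0 := by
      rw [vecMulVec_transpose', mul_vecMulVec', hPu]
      ext i j; simp [vecMulVec_apply]
    have h2 : vecMulVec w u * Pᵀ = 0 := by
      have := congrArg Matrix.transpose h1
      simpa [Matrix.transpose_mul] using this
    have h3 : vecMulVec w u * (vecMulVec w u)ᵀ = (u ⬝ᵥ u) • vecMulVec w w := by
      rw [vecMulVec_transpose', vecMulVec_mul_vecMulVec']
    rw [QForm, hΔ, h1, h2, h3, add_zero, Kop_zero', Kop_smul', hFsym] at h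
    rw [Matrix.mul_smul, Matrix.trace_smul, adjointK hFsym, ← hSdef,
      trace_mul_vecMulVec'] at h
    have hwMv : w ⬝ᵥ (S *ᵥ w) = v ⬝ᵥ (M *ᵥ v) := by
      rw [hM, hw, ← Matrix.mulVec_mulVec, ← Matrix.mulVec_mulVec,
        Matrix.dotProduct_mulVec v Vᵀ, Matrix.vecMul_transpose]
    rw [hwMv] at h
    simp only [norm_zero, smul_eq_mul] at h
    nlinarith [h, hu2]
  -- Pbar = V * (Vᵀ * Pbar)
  have hPbarcol : V * (Vᵀ * Pbar) = Pbar := by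
    ext i k
    have hp : eV n ⬝ᵥ (fun j => Pbar j k) = 0 := by
      have := congrFun hPbar k
      simpa [Matrix.mulVec, dotProduct, Matrix.transpose_apply, eV,
        mul_comm] using this
    have hcol := congrFun (projV' hn V hV hVe hp) i
    simpa [Matrix.mul_apply, Matrix.mulVec, dotProduct] using hcol
  set W := Vᵀ * Pbar with hW
  have hposW : 0 ≤ Matrix.trace (M * (W * Wᵀ)) := by
    rw [trace_mul_gram']
    exact Finset.sum_nonneg fun k _ => hquad _
  have t1 : Matrix.trace (F * Kop (P * Pᵀ)) = 0 := by
    rw [adjointK hFsym, ← hSdef]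
    rw [show P * Pᵀ = V * (L * Lᵀ) * Vᵀ from by
      rw [hP, Matrix.transpose_mul]; simp only [Matrix.mul_assoc]]
    rw [trace_conj']
    rw [show Vᵀ * S * V * (L * Lᵀ) = (Vᵀ * S * P) * Lᵀ from by
      rw [hP]; simp only [Matrix.mul_assoc]]
    rw [hstat, Matrix.zero_mul, Matrix.trace_zero]
  have t2 : Matrix.trace (F * Kop (Pbar * Pbarᵀ)) = Matrix.trace (M * (W * Wᵀ)) := by
    rw [adjointK hFsym, ← hSdef]
    rw [show Pbar * Pbarᵀ = V * (W * Wᵀ) * Vᵀ from by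
      rw [← hPbarcol, Matrix.transpose_mul, Matrix.transpose_mul,
        Matrix.transpose_transpose]; simp only [Matrix.mul_assoc]]
    rw [trace_conj', ← hM]
  have hexp : F = Kop (P * Pᵀ) - Kop (Pbar * Pbarᵀ) := rfl
  have hFF : Matrix.trace (Fᵀ * F) ≤ 0 := by
    rw [hFsym]
    nth_rewrite 2 [hexp]
    rw [Matrix.mul_sub, Matrix.trace_sub, t1, t2]
    linarith
  have h0 : Matrix.trace (Fᵀ * F) = ∑ i, ∑ j, F j i * F j i := by
    rw [trace_mul_sum']
    exact Finset.sum_congr rfl fun i _ => Finset.sum_congr rfl fun j _ => by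
      simp [Matrix.transpose_apply]
  have hz : Matrix.trace (Fᵀ * F) = 0 := by
    refine le_antisymm hFF ?_
    rw [h0]
    exact Finset.sum_nonneg fun i _ => Finset.sum_nonneg fun j _ => mul_self_nonneg _
  have hF0 : F = 0 := by
    rw [h0] at hz
    ext i j
    have h1 := (Finset.sum_eq_zero_iff_of_nonneg
      (fun a _ => Finset.sum_nonneg fun b _ => mul_self_nonneg (F b a))).mp hz j
      (Finset.mem_univ j)
    have h2 := (Finset.sum_eq_zero_iff_of_nonneg
      (fun b _ => mul_self_nonneg (F b j))).mp h1 i (Finset.mem_univ i)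
    simpa using mul_self_eq_zero.mp h2
  exact hF hF0
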